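/- For every positive integer n, the number of overpartitions π of n with mex̄(π) = m equals the coefficient of z^m q^n in Σ_{m≥1} z^m q^{m(m−1)/2} (1 − q^m) · (−q;q)_∞/(q;q)_∞; in particular, Σ_m m · #{π ∈ overpartitions of n : mex̄(π) = m} = σmex̄(n) has generating function (−q;q)_∞/(q;q)_∞ · Σ_{m≥1} m q^{m(m−1)/2}(1 − q^m). -/

import Mathlib

noncomputable instance : TopologicalSpace (PowerSeries ℤ) :=
  inferInstanceAs (TopologicalSpace ((Unit →₀ ℕ) → ℤ))
noncomputable instance : TopologicalSpace (PowerSeries ℚ) :=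
  inferInstanceAs (TopologicalSpace ((Unit →₀ ℕ) → ℚ))

/-- An overpartition of `n`: a multiset of non-overlined positive parts together with a
finite set of overlined positive parts (at most one overlined copy per part size). -/
structure Overpartition (n : ℕ) where
  parts : Multiset ℕ              -- non-overlined parts
  overlined : Finset ℕ            -- overlined parts (distinct sizes)
  parts_pos : ∀ i ∈ parts, 0 < i
  overlined_pos : ∀ i ∈ overlined, 0 < i
  sum_eq : parts.sum + ∑ i ∈ overlined, i = n

/-- Minimal excludant of an overpartition: the least positive integer not among
the non-overlined parts. -/
noncomputable def Overpartition.mex {n : ℕ} (π : Overpartition n) : ℕ :=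
  sInf {m : ℕ | 0 < m ∧ m ∉ π.parts}

/-- Least `r`-gap: the least positive integer occurring fewer than `r` times among
the non-overlined parts. -/
noncomputable def Overpartition.rgap {n : ℕ} (r : ℕ) (π : Overpartition n) : ℕ :=
  sInf {m : ℕ | 0 < m ∧ π.parts.count m < r}

/-- `σmex̄(n)`: sum of minimal excludants over all overpartitions of `n`. -/
noncomputable def sigmaMex (n : ℕ) : ℕ := ∑ᶠ π : Overpartition n, π.mex

/-- `σ_r mex̄(n)`: sum of least `r`-gaps over all overpartitions of `n`. -/
noncomputable def sigmaRMex (r n : ℕ) : ℕ := ∑ᶠ π : Overpartition n, π.rgap r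

/-- `p̄(n)`: the number of overpartitions of `n`. -/
noncomputable def pbar (n : ℕ) : ℕ := Nat.card (Overpartition n)


open PowerSeries Finset
open scoped Classical

namespace OPAux

noncomputable section

def AgreeUpTo (n : ℕ) (A B : PowerSeries ℚ) : Prop := ∀ k ≤ n, coeff k A = coeff k B

theorem agree_mul {n : ℕ} {A A' B B' : PowerSeries ℚ} (hA : AgreeUpTo n A A')
    (hB : AgreeUpTo n B B') : AgreeUpTo n (A * B) (A' * B') := by
  intro k hk
  rw [coeff_mul, coeff_mul]
  apply Finset.sum_congr rfl
  rintro ⟨i, j⟩ hij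
  rw [Finset.HasAntidiagonal.mem_antidiagonal] at hij
  rw [hA i (by omega), hB j (by omega)]

def OneTail (f : ℕ → PowerSeries ℚ) : Prop := ∀ i, ∀ k ≤ i, coeff k (f i) = coeff k 1

theorem prod_tail_agree {f : ℕ → PowerSeries ℚ} (hf : OneTail f) (n : ℕ) (t : Finset ℕ) :
    (∀ i ∈ t, n < i) → AgreeUpTo n (∏ i ∈ t, f i) 1 := by
  induction t using Finset.induction_on with
  | empty => intro _ k hk; simp
  | insert a t ha ih =>
    intro ht
    rw [Finset.prod_insert ha]
    intro k hk
    have h1 : AgreeUpTo n (f a) 1 := fun k hk => hf a k (by have := ht a (mem_insert_self a t); omega)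
    have h2 := ih (fun i hi => ht i (mem_insert_of_mem hi))
    have := agree_mul h1 h2 k hk
    rwa [one_mul] at this

theorem prod_agree {f : ℕ → PowerSeries ℚ} (hf : OneTail f) (n : ℕ) {s : Finset ℕ}
    (hs : Finset.range (n + 1) ⊆ s) :
    AgreeUpTo n (∏ i ∈ s, f i) (∏ i ∈ Finset.range (n + 1), f i) := by
  rw [← Finset.prod_sdiff hs]
  have h1 : AgreeUpTo n (∏ i ∈ s \ range (n + 1), f i) 1 :=
    prod_tail_agree hf n _ (fun i hi => by
      rw [Finset.mem_sdiff, Finset.mem_range] at hi; omega)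
  intro k hk
  have := agree_mul h1 (fun k _ => rfl : AgreeUpTo n (∏ i ∈ range (n+1), f i) _) k hk
  rwa [one_mul] at this

theorem apply_eq_coeff (φ : PowerSeries ℚ) (d : Unit →₀ ℕ) : φ d = coeff (d ()) φ := by
  have h : d = Finsupp.single () (d ()) := Finsupp.unique_single d
  conv_lhs => rw [h]
  rfl

theorem hasProd_of_oneTail {f : ℕ → PowerSeries ℚ} (hf : OneTail f) :
    HasProd f (PowerSeries.mk fun n => coeff n (∏ i ∈ Finset.range (n + 1), f i)) := by
  rw [HasProd]
  refine tendsto_pi_nhds.2 ?_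
  intro d
  refine Filter.Tendsto.congr' ?_ (tendsto_const_nhds
    (x := (PowerSeries.mk fun n => coeff n (∏ i ∈ Finset.range (n + 1), f i)) d))
  filter_upwards [Filter.eventually_ge_atTop (Finset.range (d () + 1))] with s hs
  rw [apply_eq_coeff (PowerSeries.mk fun n => coeff n (∏ i ∈ Finset.range (n + 1), f i)) d,
    apply_eq_coeff (∏ b ∈ s, f b) d, coeff_mk]
  exact (prod_agree hf (d ()) hs (d ()) le_rfl).symm

theorem coeff_tprod {f : ℕ → PowerSeries ℚ} (hf : OneTail f) (n : ℕ) :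
    coeff n (∏' i, f i) = coeff n (∏ i ∈ Finset.range (n + 1), f i) := by
  haveI : T2Space (PowerSeries ℚ) := inferInstanceAs (T2Space ((Unit →₀ ℕ) → ℚ))
  rw [(hasProd_of_oneTail hf).tprod_eq, coeff_mk]

theorem hasSum_of_tail {g : ℕ → PowerSeries ℚ} (hg : ∀ j m, j + 2 ≤ m → coeff j (g m) = 0) :
    HasSum g (PowerSeries.mk fun j => ∑ m ∈ Finset.range (j + 2), coeff j (g m)) := by
  rw [HasSum]
  refine tendsto_pi_nhds.2 ?_
  intro d
  refine Filter.Tendsto.congr' ?_ (tendsto_const_nhds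
    (x := (PowerSeries.mk fun j => ∑ m ∈ Finset.range (j + 2), coeff j (g m)) d))
  filter_upwards [Filter.eventually_ge_atTop (Finset.range (d () + 2))] with s hs
  rw [apply_eq_coeff (PowerSeries.mk fun j => ∑ m ∈ Finset.range (j + 2), coeff j (g m)) d,
    coeff_mk]
  have h2 : (∑ m ∈ s, g m) d = ∑ m ∈ s, coeff (d ()) (g m) := by
    rw [apply_eq_coeff (∑ m ∈ s, g m) d, map_sum]
  rw [h2]
  exact Finset.sum_subset hs (fun m _ hm => hg (d ()) m (by
    by_contra h
    exact hm (Finset.mem_range.2 (by omega))))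

theorem coeff_tsum_of_tail {g : ℕ → PowerSeries ℚ} (hg : ∀ j m, j + 2 ≤ m → coeff j (g m) = 0)
    (n : ℕ) : coeff n (∑' m, g m) = ∑ m ∈ Finset.range (n + 2), coeff n (g m) := by
  haveI : T2Space (PowerSeries ℚ) := inferInstanceAs (T2Space ((Unit →₀ ℕ) → ℚ))
  rw [(hasSum_of_tail hg).tsum_eq, coeff_mk]




variable {α : Type*}

/-- indicator series -/
def indicatorSeries (α : Type*) [Semiring α] (s : Set ℕ) : PowerSeries α :=
  PowerSeries.mk fun n => if n ∈ s then 1 else 0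

theorem coeff_indicator (s : Set ℕ) [Semiring α] (n : ℕ) :
    coeff n (indicatorSeries α s) = if n ∈ s then 1 else 0 :=
  coeff_mk _ _

theorem coeff_indicator_pos (s : Set ℕ) [Semiring α] (n : ℕ) (h : n ∈ s) :
    coeff n (indicatorSeries α s) = 1 := by rw [coeff_indicator, if_pos h]

theorem coeff_indicator_neg (s : Set ℕ) [Semiring α] (n : ℕ) (h : n ∉ s) :
    coeff n (indicatorSeries α s) = 0 := by rw [coeff_indicator, if_neg h]

theorem constantCoeff_indicator (s : Set ℕ) [Semiring α] :
    constantCoeff (indicatorSeries α s) = if 0 ∈ s then 1 else 0 :=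
  rfl

theorem two_series (i : ℕ) [Semiring α] :
    1 + (X : PowerSeries α) ^ i.succ = indicatorSeries α {0, i.succ} := by
  ext n
  simp only [coeff_indicator, coeff_one, coeff_X_pow, Set.mem_insert_iff, Set.mem_singleton_iff,
    map_add]
  cases' n with d
  · simp [(Nat.succ_ne_zero i).symm]
  · simp [Nat.succ_ne_zero d]

theorem num_series' [Field α] (i : ℕ) :
    (1 - (X : PowerSeries α) ^ (i + 1))⁻¹ = indicatorSeries α {k | i + 1 ∣ k} := by
  rw [PowerSeries.inv_eq_iff_mul_eq_one]
  · ext n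
    cases n with
    | zero => simp [mul_sub, zero_pow, constantCoeff_indicator]
    | succ n =>
      simp only [coeff_one, if_false, mul_sub, mul_one, coeff_indicator,
        LinearMap.map_sub, reduceCtorEq]
      simp_rw [coeff_mul, coeff_X_pow, coeff_indicator, @boole_mul _ _ _ _]
      erw [@sum_ite _ _ _ _ _ (fun _ => Classical.propDecidable _), sum_ite]
      simp_rw [@filter_filter _ _ _ _ _, sum_const_zero, add_zero, sum_const, nsmul_eq_mul, mul_one,
        sub_eq_iff_eq_add, zero_add]
      symm
      split_ifs with h
      · suffices #{a ∈ antidiagonal (n + 1) | i + 1 ∣ a.fst ∧ a.snd = i + 1} = 1 by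
          simp only [Set.mem_setOf_eq]; convert congr_arg ((↑) : ℕ → α) this; norm_cast
        rw [card_eq_one]
        cases' h with p hp
        refine ⟨((i + 1) * (p - 1), i + 1), ?_⟩
        ext ⟨a₁, a₂⟩
        simp only [mem_filter, Prod.mk.injEq, HasAntidiagonal.mem_antidiagonal, mem_singleton]
        constructor
        · rintro ⟨a_left, ⟨a, rfl⟩, rfl⟩
          refine ⟨?_, rfl⟩
          rw [Nat.mul_sub_left_distrib, ← hp, ← a_left, mul_one, Nat.add_sub_cancel]
        · rintro ⟨rfl, rfl⟩
          match p with
          | 0 => rw [mul_zero] at hp; cases hp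
          | p + 1 => rw [hp]; simp [mul_add]
      · suffices #{a ∈ antidiagonal (n + 1) | i + 1 ∣ a.fst ∧ a.snd = i + 1} = 0 by
          simp only [Set.mem_setOf_eq]; convert congr_arg ((↑) : ℕ → α) this; norm_cast
        rw [card_eq_zero]
        apply eq_empty_of_forall_notMem
        simp only [Prod.forall, mem_filter, not_and, HasAntidiagonal.mem_antidiagonal]
        rintro _ h₁ h₂ ⟨a, rfl⟩ rfl
        apply h
        simp [← h₂]
  · simp [zero_pow]

-- The main workhorse.
theorem partialGF_prop (α : Type*) [CommSemiring α] (n : ℕ) (s : Finset ℕ) (hs : ∀ i ∈ s, 0 < i)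
    (c : ℕ → Set ℕ) (hc : ∀ i, i ∉ s → 0 ∈ c i) :
    #{p : n.Partition | (∀ j, p.parts.count j ∈ c j) ∧ ∀ j ∈ p.parts, j ∈ s} =
      coeff n (∏ i ∈ s, indicatorSeries α ((· * i) '' c i)) := by
  simp_rw [coeff_prod, coeff_indicator, prod_boole, sum_boole]
  apply congr_arg
  simp only [mem_univ, forall_true_left, not_and, not_forall, exists_prop,
    Set.mem_image, not_exists]
  set φ : (a : Nat.Partition n) →
    a ∈ filter (fun p ↦ (∀ (j : ℕ), Multiset.count j p.parts ∈ c j) ∧ ∀ j ∈ p.parts, j ∈ s) univ →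
    ℕ →₀ ℕ := fun p _ => {
      toFun := fun i => Multiset.count i p.parts • i
      support := Finset.filter (fun i => i ≠ 0) p.parts.toFinset
      mem_support_toFun := fun a => by
        simp only [smul_eq_mul, ne_eq, mul_eq_zero, Multiset.count_eq_zero]
        rw [not_or, not_not]
        simp only [Multiset.mem_toFinset, not_not, mem_filter] }
  refine Finset.card_bij φ ?_ ?_ ?_
  · intro a ha
    simp only [φ, not_forall, not_exists, not_and, exists_prop, mem_filter]
    rw [mem_finsuppAntidiag]
    dsimp only [ne_eq, smul_eq_mul, id_eq, eq_mpr_eq_cast, le_eq_subset, Finsupp.coe_mk]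
    simp only [mem_univ, forall_true_left, not_and, not_forall, exists_prop,
      mem_filter, true_and] at ha
    refine ⟨⟨?_, fun i ↦ ?_⟩, fun i _ ↦ ⟨a.parts.count i, ha.1 i, rfl⟩⟩
    · conv_rhs => simp [← a.parts_sum]
      rw [sum_multiset_count_of_subset _ s]
      · simp only [smul_eq_mul]
      · intro i
        simp only [Multiset.mem_toFinset, not_not, mem_filter]
        apply ha.2
    · simp only [ne_eq, Multiset.mem_toFinset, not_not, mem_filter, and_imp]
      exact fun hi _ ↦ ha.2 i hi
  · skip
    intro p₁ hp₁ p₂ hp₂ h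
    apply Nat.Partition.ext
    simp only [true_and, mem_univ, mem_filter] at hp₁ hp₂
    ext i
    simp only [φ, ne_eq, Multiset.mem_toFinset, not_not, smul_eq_mul, Finsupp.mk.injEq] at h
    by_cases hi : i = 0
    · rw [hi]
      rw [Multiset.count_eq_zero_of_notMem]
      · rw [Multiset.count_eq_zero_of_notMem]
        intro a; exact Nat.lt_irrefl 0 (hs 0 (hp₂.2 0 a))
      intro a; exact Nat.lt_irrefl 0 (hs 0 (hp₁.2 0 a))
    · rw [← mul_left_inj' hi]
      rw [funext_iff] at h
      exact h.2 i
  · simp only [φ, mem_filter, mem_finsuppAntidiag, mem_univ, exists_prop, true_and, and_assoc]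
    rintro f ⟨hf, hf₃, hf₄⟩
    have hf' : f ∈ finsuppAntidiag s n := mem_finsuppAntidiag.mpr ⟨hf, hf₃⟩
    simp only [mem_finsuppAntidiag] at hf'
    refine ⟨⟨∑ i ∈ s, Multiset.replicate (f i / i) i, ?_, ?_⟩, ?_, ?_, ?_⟩
    · intro i hi
      simp only [exists_prop, Multiset.mem_sum, mem_map, Function.Embedding.coeFn_mk] at hi
      rcases hi with ⟨t, ht, z⟩
      apply hs
      rwa [Multiset.eq_of_mem_replicate z]
    · simp_rw [Multiset.sum_sum, Multiset.sum_replicate, Nat.nsmul_eq_mul]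
      rw [← hf'.1]
      refine sum_congr rfl fun i hi => Nat.div_mul_cancel ?_
      rcases hf₄ i hi with ⟨w, _, hw₂⟩
      rw [← hw₂]
      exact dvd_mul_left _ _
    · intro i
      simp_rw [Multiset.count_sum', Multiset.count_replicate, sum_ite_eq']
      split_ifs with h
      · rcases hf₄ i h with ⟨w, hw₁, hw₂⟩
        rwa [← hw₂, Nat.mul_div_cancel _ (hs i h)]
      · exact hc _ h
    · intro i hi
      rw [Multiset.mem_sum] at hi
      rcases hi with ⟨j, hj₁, hj₂⟩
      rwa [Multiset.eq_of_mem_replicate hj₂]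
    · ext i
      simp_rw [Multiset.count_sum', Multiset.count_replicate, sum_ite_eq']
      simp only [ne_eq, Multiset.mem_toFinset, not_not, smul_eq_mul, ite_mul,
        zero_mul, Finsupp.coe_mk]
      split_ifs with h
      · apply Nat.div_mul_cancel
        rcases hf₄ i h with ⟨w, _, hw₂⟩
        apply Dvd.intro_left _ hw₂
      · apply symm
        rw [← Finsupp.notMem_support_iff]
        exact notMem_mono hf'.2 h

theorem countD (a N : ℕ) (h : a < N + 1) :
    ((Nat.card {p : a.Partition // p.parts.Nodup} : ℚ))
      = coeff a (∏ i ∈ range N, (1 + (X : PowerSeries ℚ) ^ (i + 1))) := by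
  rw [Nat.card_eq_fintype_card, Fintype.card_subtype]
  have key := partialGF_prop ℚ a ((range N).map ⟨Nat.succ, Nat.succ_injective⟩)
      (by intro i hi; rw [mem_map] at hi; obtain ⟨_, _, rfl⟩ := hi; exact Nat.succ_pos _)
      (fun _ => {0, 1}) (fun _ _ => Or.inl rfl)
  have hprod : (∏ i ∈ (range N).map ⟨Nat.succ, Nat.succ_injective⟩,
      indicatorSeries ℚ ((· * i) '' {0, 1})) = ∏ i ∈ range N, (1 + (X : PowerSeries ℚ) ^ (i + 1)) := by
    simp_rw [Finset.prod_map, two_series]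
    congr with i
    simp [Set.image_pair]
  rw [hprod] at key
  rw [← key]
  congr 1
  apply congrArg
  ext p
  simp only [mem_filter, mem_univ, true_and]
  simp only [Set.mem_insert_iff, Set.mem_singleton_iff]
  constructor
  · intro hnd
    rw [Multiset.nodup_iff_count_le_one] at hnd
    refine ⟨fun j => by have := hnd j; omega, fun j hj => ?_⟩
    have hj1 : 0 < j := p.parts_pos hj
    have hj2 : j ≤ a := by
      simpa [p.parts_sum] using Multiset.single_le_sum (fun _ _ => Nat.zero_le _) _ hj
    rw [mem_map]
    exact ⟨j - 1, mem_range.2 (by omega), by simp only [Function.Embedding.coeFn_mk]; omega⟩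
  · rintro ⟨h1, _⟩
    rw [Multiset.nodup_iff_count_le_one]
    intro j
    rcases h1 j with h' | h' <;> omega

theorem countC (b N m : ℕ) (hb : b < N + 1) (hm : 1 ≤ m) :
    ((Nat.card {p : b.Partition // m ∉ p.parts} : ℚ))
      = coeff b (∏ i ∈ (range N).erase (m - 1), (1 - (X : PowerSeries ℚ) ^ (i + 1))⁻¹) := by
  rw [Nat.card_eq_fintype_card, Fintype.card_subtype]
  have key := partialGF_prop ℚ b (((range N).erase (m - 1)).map ⟨Nat.succ, Nat.succ_injective⟩)
      (by intro i hi; rw [mem_map] at hi; obtain ⟨_, _, rfl⟩ := hi; exact Nat.succ_pos _)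
      (fun _ => Set.univ) (fun _ _ => trivial)
  have hprod : (∏ i ∈ ((range N).erase (m - 1)).map ⟨Nat.succ, Nat.succ_injective⟩,
      indicatorSeries ℚ ((· * i) '' Set.univ))
      = ∏ i ∈ (range N).erase (m - 1), (1 - (X : PowerSeries ℚ) ^ (i + 1))⁻¹ := by
    rw [Finset.prod_map]
    apply Finset.prod_congr rfl
    intro i _
    rw [num_series']
    have hset : ((fun a => a * i.succ) '' Set.univ : Set ℕ) = {k | i + 1 ∣ k} := by
      ext k
      simp only [Set.mem_image, Set.mem_univ, true_and, Set.mem_setOf_eq]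
      constructor
      · rintro ⟨p, rfl⟩; exact Dvd.intro_left p rfl
      · rintro ⟨p, rfl⟩; exact ⟨p, mul_comm _ _⟩
    exact congrArg (indicatorSeries ℚ) hset
  rw [hprod] at key
  rw [← key]
  congr 1
  apply congrArg
  ext p
  simp only [mem_filter, mem_univ, true_and]
  simp only [Set.mem_univ, forall_const, true_and]
  constructor
  · intro hnm j hj
    have hj1 : 0 < j := p.parts_pos hj
    have hj2 : j ≤ b := by
      simpa [p.parts_sum] using Multiset.single_le_sum (fun _ _ => Nat.zero_le _) _ hj
    have hjm : j ≠ m := fun h => hnm (h ▸ hj)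
    rw [mem_map]
    exact ⟨j - 1, mem_erase.2 ⟨by omega, mem_range.2 (by omega)⟩,
      by simp only [Function.Embedding.coeFn_mk]; omega⟩
  · intro hall hmem
    have := hall m hmem
    rw [mem_map] at this
    obtain ⟨i, hi, hie⟩ := this
    simp only [Function.Embedding.coeFn_mk] at hie
    rw [mem_erase, mem_range] at hi
    omega
end


noncomputable section
open Overpartition

theorem op_ext {n : ℕ} {π₁ π₂ : Overpartition n} (h1 : π₁.parts = π₂.parts)
    (h2 : π₁.overlined = π₂.overlined) : π₁ = π₂ := by
  cases π₁; cases π₂; simp only at h1 h2; subst h1; subst h2; rfl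

theorem parts_sum_le {n : ℕ} (π : Overpartition n) : π.parts.sum ≤ n := by
  have := π.sum_eq; omega

theorem part_le {n : ℕ} (π : Overpartition n) {i : ℕ} (h : i ∈ π.parts) : i ≤ n :=
  le_trans (Multiset.single_le_sum (fun _ _ => Nat.zero_le _) _ h) (parts_sum_le π)

theorem overl_le {n : ℕ} (π : Overpartition n) {i : ℕ} (h : i ∈ π.overlined) : i ≤ n := by
  have h1 : i ≤ ∑ j ∈ π.overlined, j :=
    Finset.single_le_sum (f := fun j => j) (fun _ _ => Nat.zero_le _) h
  have := π.sum_eq; omega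

theorem count_le {n : ℕ} (π : Overpartition n) (k : ℕ) : π.parts.count k ≤ n := by
  rcases Nat.eq_zero_or_pos k with rfl | hk
  · rw [Multiset.count_eq_zero_of_notMem (fun h => by have := π.parts_pos 0 h; omega)]
    omega
  · have h1 : Multiset.replicate (π.parts.count k) k ≤ π.parts :=
      Multiset.le_count_iff_replicate_le.mp le_rfl
    obtain ⟨u, hu⟩ := Multiset.le_iff_exists_add.mp h1
    have h2 : (Multiset.replicate (π.parts.count k) k).sum ≤ π.parts.sum := by
      conv_rhs => rw [hu]
      rw [Multiset.sum_add]; omega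
    rw [Multiset.sum_replicate, smul_eq_mul] at h2
    have h3 := parts_sum_le π
    have h4 : π.parts.count k ≤ π.parts.count k * k := Nat.le_mul_of_pos_right _ hk
    omega

instance opFinite (n : ℕ) : Finite (Overpartition n) := by
  apply Finite.of_injective (f := fun π : Overpartition n =>
    ((fun k : Fin (n + 1) => (⟨π.parts.count (k : ℕ), Nat.lt_succ_of_le (count_le π (k : ℕ))⟩ : Fin (n + 1))),
     (Finset.univ.filter fun k : Fin (n + 1) => (k : ℕ) ∈ π.overlined)))
  intro π₁ π₂ h
  rw [Prod.mk.injEq] at h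
  obtain ⟨h1, h2⟩ := h
  apply op_ext
  · ext k
    by_cases hk : k ≤ n
    · have := congrFun h1 ⟨k, by omega⟩
      simpa using congrArg Fin.val this
    · rw [Multiset.count_eq_zero_of_notMem (fun hm => hk (part_le π₁ hm)),
        Multiset.count_eq_zero_of_notMem (fun hm => hk (part_le π₂ hm))]
  · ext k
    by_cases hk : k ≤ n
    · have := Finset.ext_iff.mp h2 ⟨k, by omega⟩
      simpa using this
    · constructor
      · intro hm; exact absurd (overl_le π₁ hm) hk
      · intro hm; exact absurd (overl_le π₂ hm) hk

theorem mex_mem {n : ℕ} (π : Overpartition n) : 0 < π.mex ∧ π.mex ∉ π.parts :=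
  Nat.sInf_mem (⟨n + 1, Nat.succ_pos n, fun h => by have := part_le π h; omega⟩ :
    Set.Nonempty {m | 0 < m ∧ m ∉ π.parts})

theorem mex_pos {n : ℕ} (π : Overpartition n) : 0 < π.mex := (mex_mem π).1

theorem mex_not_mem {n : ℕ} (π : Overpartition n) : π.mex ∉ π.parts := (mex_mem π).2

theorem mex_le {n : ℕ} (π : Overpartition n) : π.mex ≤ n + 1 :=
  Nat.sInf_le ⟨Nat.succ_pos n, fun h => by have := part_le π h; omega⟩

theorem mex_eq_iff {n : ℕ} (π : Overpartition n) {m : ℕ} :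
    π.mex = m ↔ 0 < m ∧ m ∉ π.parts ∧ ∀ k, 0 < k → k < m → k ∈ π.parts := by
  constructor
  · rintro rfl
    refine ⟨mex_pos π, mex_not_mem π, fun k hk hkm => ?_⟩
    by_contra hkp
    have hle : π.mex ≤ k := Nat.sInf_le ⟨hk, hkp⟩
    omega
  · rintro ⟨hm, hmp, hlt⟩
    refine le_antisymm (Nat.sInf_le ⟨hm, hmp⟩) ?_
    by_contra hlt2
    push_neg at hlt2
    exact (mex_mem π).2 (hlt _ (mex_pos π) hlt2)

/-! ### staircase -/

def stair (j : ℕ) : Multiset ℕ := (Multiset.range j).map (· + 1)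

theorem mem_stair {j k : ℕ} : k ∈ stair j ↔ 1 ≤ k ∧ k ≤ j := by
  simp only [stair, Multiset.mem_map, Multiset.mem_range]
  constructor
  · rintro ⟨i, hi, rfl⟩; omega
  · intro hk; exact ⟨k - 1, by omega, by omega⟩

theorem stair_nodup (j : ℕ) : (stair j).Nodup :=
  (Multiset.nodup_range j).map (fun _ _ h => by omega)

theorem stair_sum_two (j : ℕ) : (stair j).sum * 2 = j * (j + 1) := by
  have h1 : (stair j).sum = ∑ i ∈ Finset.range j, (i + 1) := by
    rw [Finset.sum]; rfl
  rw [h1, Finset.sum_add_distrib, Finset.sum_const, Finset.card_range, smul_eq_mul, mul_one]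
  have h2 := Finset.sum_range_id_mul_two j
  cases j with
  | zero => simp
  | succ j' =>
    simp only [Nat.add_sub_cancel] at h2
    ring_nf
    ring_nf at h2
    omega

theorem stair_sum (m : ℕ) (hm : 1 ≤ m) : (stair (m - 1)).sum = m * (m - 1) / 2 := by
  have h2 := stair_sum_two (m - 1)
  have h3 : (m - 1) + 1 = m := by omega
  rw [h3] at h2
  exact (Nat.div_eq_of_eq_mul_left (by norm_num) (by rw [Nat.mul_comm (m-1) m] at h2; omega)).symm

theorem stair_le_parts {n m : ℕ} {π : Overpartition n} (hπ : π.mex = m) :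
    stair (m - 1) ≤ π.parts := by
  rw [Multiset.le_iff_count]
  intro k
  have hnd := Multiset.nodup_iff_count_le_one.mp (stair_nodup (m - 1)) k
  by_cases hk : k ∈ stair (m - 1)
  · have hb := mem_stair.mp hk
    have hmem : k ∈ π.parts := ((mex_eq_iff π).mp hπ).2.2 k (by omega) (by
      have := ((mex_eq_iff π).mp hπ).1; omega)
    have := Multiset.one_le_count_iff_mem.mpr hmem
    omega
  · rw [Multiset.count_eq_zero_of_notMem hk]
    omega

/-! ### bijection A -/

def equivA (n m : ℕ) (hm : 1 ≤ m) (hT : (stair (m - 1)).sum ≤ n) :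
    {π : Overpartition n // π.mex = m} ≃
      {π' : Overpartition (n - (stair (m - 1)).sum) // m ∉ π'.parts} where
  toFun := fun q => ⟨⟨q.1.parts - stair (m - 1), q.1.overlined,
      fun i hi => q.1.parts_pos i (Multiset.mem_of_le (Multiset.sub_le_self _ _) hi),
      q.1.overlined_pos, by
        have hle := stair_le_parts q.2
        have h1 : (q.1.parts - stair (m - 1)) + stair (m - 1) = q.1.parts :=
          tsub_add_cancel_of_le hle
        have h2 : (q.1.parts - stair (m - 1)).sum + (stair (m - 1)).sum = q.1.parts.sum := by
          conv_rhs => rw [← h1]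
          rw [Multiset.sum_add]
        have h3 := q.1.sum_eq
        omega⟩,
    fun hmem => (q.2 ▸ mex_not_mem q.1)
      (Multiset.mem_of_le (Multiset.sub_le_self _ _) hmem)⟩
  invFun := fun q => ⟨⟨q.1.parts + stair (m - 1), q.1.overlined,
      fun i hi => by
        rcases Multiset.mem_add.1 hi with h | h
        · exact q.1.parts_pos i h
        · have := mem_stair.mp h; omega,
      q.1.overlined_pos, by
        have := q.1.sum_eq
        rw [Multiset.sum_add]
        omega⟩, by
      rw [mex_eq_iff]
      refine ⟨hm, ?_, ?_⟩
      · intro hmem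
        rcases Multiset.mem_add.1 hmem with h | h
        · exact q.2 h
        · have := mem_stair.mp h; omega
      · intro k hk hkm
        exact Multiset.mem_add.2 (Or.inr (mem_stair.2 ⟨hk, by omega⟩))⟩
  left_inv := fun q => by
    apply Subtype.ext
    exact op_ext (tsub_add_cancel_of_le (stair_le_parts q.2)) rfl
  right_inv := fun q => by
    apply Subtype.ext
    exact op_ext (add_tsub_cancel_right _ _) rfl

/-! ### fiber decomposition -/

theorem finset_sum_id (s : Finset ℕ) : ∑ i ∈ s, i = s.val.sum := by
  rw [Finset.sum]; exact congrArg Multiset.sum (Multiset.map_id s.val)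

def fiberEquiv (n' m : ℕ) (x : ℕ × ℕ) (hx : x.1 + x.2 = n') :
    {q : {π' : Overpartition n' // m ∉ π'.parts} //
        ((∑ i ∈ q.1.overlined, i), q.1.parts.sum) = x} ≃
      {p : Nat.Partition x.1 // p.parts.Nodup} × {p : Nat.Partition x.2 // m ∉ p.parts} where
  toFun := fun q =>
    (⟨⟨q.1.1.overlined.val, fun {i} hi => q.1.1.overlined_pos i hi, by
        rw [← finset_sum_id]
        exact congrArg Prod.fst q.2⟩, q.1.1.overlined.nodup⟩,
     ⟨⟨q.1.1.parts, fun {i} hi => q.1.1.parts_pos i hi, congrArg Prod.snd q.2⟩, q.1.2⟩)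
  invFun := fun pq =>
    ⟨⟨⟨pq.2.1.parts, ⟨pq.1.1.parts, pq.1.2⟩, fun i hi => pq.2.1.parts_pos hi,
        fun i hi => pq.1.1.parts_pos hi, by
        have h1 : ∑ i ∈ (⟨pq.1.1.parts, pq.1.2⟩ : Finset ℕ), i = pq.1.1.parts.sum :=
          finset_sum_id _
        rw [h1, pq.2.1.parts_sum, pq.1.1.parts_sum]
        omega⟩, pq.2.2⟩, by
      apply Prod.ext
      · exact (finset_sum_id _).trans pq.1.1.parts_sum
      · exact pq.2.1.parts_sum⟩
  left_inv := fun q => by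
    apply Subtype.ext
    apply Subtype.ext
    exact op_ext rfl rfl
  right_inv := fun pq => by
    refine Prod.ext (Subtype.ext (Nat.Partition.ext ?_)) (Subtype.ext (Nat.Partition.ext ?_))
    · rfl
    · rfl

theorem card_noM (n' m : ℕ) :
    Nat.card {π' : Overpartition n' // m ∉ π'.parts}
      = ∑ x ∈ Finset.HasAntidiagonal.antidiagonal n',
          Nat.card {p : Nat.Partition x.1 // p.parts.Nodup} *
            Nat.card {p : Nat.Partition x.2 // m ∉ p.parts} := by
  classical
  letI : Fintype (Overpartition n') := Fintype.ofFinite _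
  rw [Nat.card_eq_fintype_card, ← Finset.card_univ]
  rw [Finset.card_eq_sum_card_fiberwise
    (f := fun q : {π' : Overpartition n' // m ∉ π'.parts} =>
      ((∑ i ∈ q.1.overlined, i), q.1.parts.sum))
    (t := Finset.HasAntidiagonal.antidiagonal n')
    (fun q _ => Finset.HasAntidiagonal.mem_antidiagonal.2 (by
      show (∑ i ∈ q.1.overlined, i) + q.1.parts.sum = n'
      have := q.1.sum_eq; omega))]
  apply Finset.sum_congr rfl
  intro x hx
  rw [Finset.HasAntidiagonal.mem_antidiagonal] at hx
  rw [← Fintype.card_subtype, ← Nat.card_eq_fintype_card,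
    Nat.card_congr (fiberEquiv n' m x hx), Nat.card_prod]

end
end OPAux
namespace OPAux
noncomputable section

theorem msum_mono {s t : Multiset ℕ} (h : s ≤ t) : s.sum ≤ t.sum := by
  obtain ⟨u, rfl⟩ := Multiset.le_iff_exists_add.mp h
  rw [Multiset.sum_add]; omega

theorem oneTail_D : OneTail (fun i => 1 + (X : PowerSeries ℚ) ^ (i + 1)) := by
  intro i k hk
  rw [map_add, coeff_X_pow, if_neg (by omega), add_zero]

theorem oneTail_E : OneTail (fun i => 1 - (X : PowerSeries ℚ) ^ (i + 1)) := by
  intro i k hk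
  rw [map_sub, coeff_X_pow, if_neg (by omega), sub_zero]

theorem oneTail_G : OneTail (fun i => (1 - (X : PowerSeries ℚ) ^ (i + 1))⁻¹) := by
  intro i k hk
  show coeff k ((1 - (X : PowerSeries ℚ) ^ (i + 1))⁻¹) = coeff k 1
  rw [num_series', coeff_indicator, coeff_one]
  simp only [Set.mem_setOf_eq]
  rcases Nat.eq_zero_or_pos k with rfl | h
  · simp
  · rw [if_neg (fun hdvd => by have := Nat.le_of_dvd h hdvd; omega), if_neg (by omega)]

theorem fac_const (i : ℕ) : constantCoeff (1 - (X : PowerSeries ℚ) ^ (i + 1)) ≠ 0 := by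
  simp [zero_pow]

theorem E_const : constantCoeff (∏' i : ℕ, (1 - (X : PowerSeries ℚ) ^ (i + 1))) ≠ 0 := by
  rw [← coeff_zero_eq_constantCoeff_apply, coeff_tprod oneTail_E 0]
  simp [zero_pow]

theorem Einv_coeff (k : ℕ) :
    coeff k (∏' i : ℕ, (1 - (X : PowerSeries ℚ) ^ (i + 1)))⁻¹
      = coeff k (∏ i ∈ Finset.range (k + 1), (1 - (X : PowerSeries ℚ) ^ (i + 1))⁻¹) := by
  have hinv : (∏' i : ℕ, (1 - (X : PowerSeries ℚ) ^ (i + 1)))⁻¹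
      = PowerSeries.mk (fun j => coeff j (∏ i ∈ Finset.range (j + 1),
          (1 - (X : PowerSeries ℚ) ^ (i + 1))⁻¹)) := by
    rw [PowerSeries.inv_eq_iff_mul_eq_one E_const]
    ext j
    have h1 : AgreeUpTo j (PowerSeries.mk (fun j => coeff j (∏ i ∈ Finset.range (j + 1),
        (1 - (X : PowerSeries ℚ) ^ (i + 1))⁻¹)))
        (∏ i ∈ Finset.range (j + 1), (1 - (X : PowerSeries ℚ) ^ (i + 1))⁻¹) := by
      intro k hk
      rw [coeff_mk]
      exact (prod_agree oneTail_G k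
        (by intro x hx; rw [Finset.mem_range] at *; omega) k le_rfl).symm
    have h2 : AgreeUpTo j (∏' i : ℕ, (1 - (X : PowerSeries ℚ) ^ (i + 1)))
        (∏ i ∈ Finset.range (j + 1), (1 - (X : PowerSeries ℚ) ^ (i + 1))) := by
      intro k hk
      rw [coeff_tprod oneTail_E k]
      exact (prod_agree oneTail_E k
        (by intro x hx; rw [Finset.mem_range] at *; omega) k le_rfl).symm
    rw [agree_mul h1 h2 j le_rfl, ← Finset.prod_mul_distrib,
      Finset.prod_eq_one (fun i _ => PowerSeries.inv_mul_cancel _ (fac_const i))]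
  rw [hinv, coeff_mk]

theorem main_count (n m : ℕ) :
    ((Nat.card {π : Overpartition n // π.mex = m} : ℚ))
      = coeff n (((X : PowerSeries ℚ) ^ (m * (m - 1) / 2) * (1 - (X : PowerSeries ℚ) ^ m)) *
          ((∏' i : ℕ, (1 + (X : PowerSeries ℚ) ^ (i + 1))) *
            (∏' i : ℕ, (1 - (X : PowerSeries ℚ) ^ (i + 1)))⁻¹)) := by
  rcases Nat.eq_zero_or_pos m with rfl | hm
  · haveI he : IsEmpty {π : Overpartition n // π.mex = 0} :=
      ⟨fun q => by have := mex_pos q.1; omega⟩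
    rw [Nat.card_of_isEmpty]
    simp
  · have hsum : (stair (m - 1)).sum = m * (m - 1) / 2 := stair_sum m hm
    by_cases hTn : m * (m - 1) / 2 ≤ n
    · -- main case
      rw [mul_assoc, coeff_X_pow_mul', if_pos hTn]
      set n' := n - m * (m - 1) / 2 with hn'
      set N := n' + m with hN
      have hDag : AgreeUpTo n' (∏' i : ℕ, (1 + (X : PowerSeries ℚ) ^ (i + 1)))
          (∏ i ∈ Finset.range N, (1 + (X : PowerSeries ℚ) ^ (i + 1))) := by
        intro k hk
        rw [coeff_tprod oneTail_D k]
        exact (prod_agree oneTail_D k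
          (by intro x hx; rw [Finset.mem_range] at *; omega) k le_rfl).symm
      have hGag : AgreeUpTo n' (∏' i : ℕ, (1 - (X : PowerSeries ℚ) ^ (i + 1)))⁻¹
          (∏ i ∈ Finset.range N, (1 - (X : PowerSeries ℚ) ^ (i + 1))⁻¹) := by
        intro k hk
        rw [Einv_coeff k]
        exact (prod_agree oneTail_G k
          (by intro x hx; rw [Finset.mem_range] at *; omega) k le_rfl).symm
      have hAg := agree_mul (fun k _ => rfl :
          AgreeUpTo n' (1 - (X : PowerSeries ℚ) ^ m) (1 - (X : PowerSeries ℚ) ^ m))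
        (agree_mul hDag hGag) n' le_rfl
      rw [hAg]
      have hmem : m - 1 ∈ Finset.range N := Finset.mem_range.2 (by omega)
      have hxm : ((m : ℕ) - 1) + 1 = m := by omega
      have hc : constantCoeff (1 - (X : PowerSeries ℚ) ^ m) ≠ 0 := by
        have := fac_const (m - 1); rwa [hxm] at this
      have hsplit : (∏ i ∈ Finset.range N, (1 - (X : PowerSeries ℚ) ^ (i + 1))⁻¹)
          = (1 - (X : PowerSeries ℚ) ^ m)⁻¹ *
            ∏ i ∈ (Finset.range N).erase (m - 1), (1 - (X : PowerSeries ℚ) ^ (i + 1))⁻¹ := by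
        rw [← Finset.mul_prod_erase _ _ hmem, hxm]
      have hfac : (1 - (X : PowerSeries ℚ) ^ m) *
          ((∏ i ∈ Finset.range N, (1 + (X : PowerSeries ℚ) ^ (i + 1))) *
            (∏ i ∈ Finset.range N, (1 - (X : PowerSeries ℚ) ^ (i + 1))⁻¹))
          = (∏ i ∈ Finset.range N, (1 + (X : PowerSeries ℚ) ^ (i + 1))) *
            (∏ i ∈ (Finset.range N).erase (m - 1), (1 - (X : PowerSeries ℚ) ^ (i + 1))⁻¹) := by
        rw [hsplit]
        calc (1 - (X : PowerSeries ℚ) ^ m) *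
            ((∏ i ∈ Finset.range N, (1 + (X : PowerSeries ℚ) ^ (i + 1))) *
              ((1 - (X : PowerSeries ℚ) ^ m)⁻¹ *
                ∏ i ∈ (Finset.range N).erase (m - 1), (1 - (X : PowerSeries ℚ) ^ (i + 1))⁻¹))
            = ((1 - (X : PowerSeries ℚ) ^ m) * (1 - (X : PowerSeries ℚ) ^ m)⁻¹) *
              ((∏ i ∈ Finset.range N, (1 + (X : PowerSeries ℚ) ^ (i + 1))) *
                ∏ i ∈ (Finset.range N).erase (m - 1), (1 - (X : PowerSeries ℚ) ^ (i + 1))⁻¹) := by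
              ring
          _ = _ := by rw [PowerSeries.mul_inv_cancel _ hc, one_mul]
      rw [hfac, coeff_mul]
      have hcard := Nat.card_congr (equivA n m hm (by omega))
      rw [hsum] at hcard
      rw [hcard, card_noM]
      rw [Nat.cast_sum]
      apply Finset.sum_congr rfl
      intro x hx
      rw [Finset.HasAntidiagonal.mem_antidiagonal] at hx
      rw [Nat.cast_mul, countD x.1 N (by omega), countC x.2 N m (by omega) hm]
    · -- degenerate: coefficient 0, no such overpartition
      rw [mul_assoc, coeff_X_pow_mul', if_neg hTn]
      haveI he : IsEmpty {π : Overpartition n // π.mex = m} := ⟨fun q => by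
        have h1 := msum_mono (stair_le_parts q.2)
        have h2 := parts_sum_le q.1
        omega⟩
      rw [Nat.card_of_isEmpty]
      simp

theorem coeff_natCast_mul (m j : ℕ) (A : PowerSeries ℚ) :
    coeff j ((m : PowerSeries ℚ) * A) = (m : ℚ) * coeff j A := by
  rw [← map_natCast (C (R := ℚ)) m, coeff_C_mul]

theorem g_tail : ∀ (j m' : ℕ), j + 2 ≤ m' →
    coeff j ((m' : PowerSeries ℚ) *
      ((X : PowerSeries ℚ) ^ (m' * (m' - 1) / 2) * (1 - (X : PowerSeries ℚ) ^ m'))) = 0 := by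
  intro j m' hm
  rw [coeff_natCast_mul, coeff_X_pow_mul', if_neg, mul_zero]
  intro hle
  have h1 : 2 * (j + 1) ≤ m' * (m' - 1) := Nat.mul_le_mul (by omega) (by omega)
  have h2 : j + 1 ≤ m' * (m' - 1) / 2 := (Nat.le_div_iff_mul_le (by norm_num)).mpr (by omega)
  omega

theorem sigma_group (n : ℕ) :
    (sigmaMex n : ℚ) = ∑ m ∈ Finset.range (n + 2),
      (m : ℚ) * (Nat.card {π : Overpartition n // π.mex = m} : ℚ) := by
  classical
  letI : Fintype (Overpartition n) := Fintype.ofFinite _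
  rw [sigmaMex, finsum_eq_sum_of_fintype]
  rw [← Finset.sum_fiberwise_of_maps_to (g := Overpartition.mex) (t := Finset.range (n + 2))
      (fun π _ => Finset.mem_range.2 (by have := mex_le π; omega)) Overpartition.mex]
  push_cast
  apply Finset.sum_congr rfl
  intro m _
  rw [Finset.sum_congr rfl (fun π hπ => by
      exact_mod_cast congrArg Nat.cast (Finset.mem_filter.mp hπ).2),
    Finset.sum_const, nsmul_eq_mul]
  rw [Nat.card_eq_fintype_card, Fintype.card_subtype]
  push_cast
  ring

end
end OPAux
open PowerSeries

/-- The number of overpartitions of n with mex̄ = m is the coefficient of z^m qⁿ in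
Σ_{m≥1} z^m q^{m(m−1)/2}(1−q^m)·(−q;q)_∞/(q;q)_∞; consequently the generating
function of σmex̄ is (−q;q)_∞/(q;q)_∞ · Σ_{m≥1} m q^{m(m−1)/2}(1−q^m). -/
theorem stmt19 :
    (∀ n : ℕ, 0 < n → ∀ m : ℕ,
      (Nat.card {π : Overpartition n // π.mex = m} : ℚ)
        = coeff n ((X ^ (m * (m - 1) / 2) * (1 - X ^ m)) *
            ((∏' i : ℕ, (1 + (X : PowerSeries ℚ) ^ (i + 1))) *
              (∏' i : ℕ, (1 - (X : PowerSeries ℚ) ^ (i + 1)))⁻¹))) ∧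
    PowerSeries.mk (fun n => (sigmaMex n : ℚ))
      = ((∏' i : ℕ, (1 + (X : PowerSeries ℚ) ^ (i + 1))) *
          (∏' i : ℕ, (1 - (X : PowerSeries ℚ) ^ (i + 1)))⁻¹) *
          ∑' m : ℕ, (m : PowerSeries ℚ) * (X ^ (m * (m - 1) / 2) * (1 - X ^ m)) := by
  constructor
  · intro n _ m
    exact OPAux.main_count n m
  · apply PowerSeries.ext
    intro n
    rw [coeff_mk, coeff_mul]
    calc (sigmaMex n : ℚ)
        = ∑ m ∈ Finset.range (n + 2),
            (m : ℚ) * (Nat.card {π : Overpartition n // π.mex = m} : ℚ) :=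
          OPAux.sigma_group n
      _ = ∑ m ∈ Finset.range (n + 2), coeff n
            (((∏' i : ℕ, (1 + (X : PowerSeries ℚ) ^ (i + 1))) *
              (∏' i : ℕ, (1 - (X : PowerSeries ℚ) ^ (i + 1)))⁻¹) *
              ((m : PowerSeries ℚ) *
                ((X : PowerSeries ℚ) ^ (m * (m - 1) / 2) * (1 - (X : PowerSeries ℚ) ^ m)))) := by
          apply Finset.sum_congr rfl
          intro m _
          rw [OPAux.main_count n m]
          have halg : ((∏' i : ℕ, (1 + (X : PowerSeries ℚ) ^ (i + 1))) *
              (∏' i : ℕ, (1 - (X : PowerSeries ℚ) ^ (i + 1)))⁻¹) *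
              ((m : PowerSeries ℚ) *
                ((X : PowerSeries ℚ) ^ (m * (m - 1) / 2) * (1 - (X : PowerSeries ℚ) ^ m)))
              = (m : PowerSeries ℚ) *
                (((X : PowerSeries ℚ) ^ (m * (m - 1) / 2) * (1 - (X : PowerSeries ℚ) ^ m)) *
                  ((∏' i : ℕ, (1 + (X : PowerSeries ℚ) ^ (i + 1))) *
                    (∏' i : ℕ, (1 - (X : PowerSeries ℚ) ^ (i + 1)))⁻¹)) := by ring
          rw [halg, OPAux.coeff_natCast_mul]
      _ = ∑ m ∈ Finset.range (n + 2), ∑ x ∈ Finset.HasAntidiagonal.antidiagonal n,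
            coeff x.1 ((∏' i : ℕ, (1 + (X : PowerSeries ℚ) ^ (i + 1))) *
              (∏' i : ℕ, (1 - (X : PowerSeries ℚ) ^ (i + 1)))⁻¹) *
            coeff x.2 ((m : PowerSeries ℚ) *
              ((X : PowerSeries ℚ) ^ (m * (m - 1) / 2) * (1 - (X : PowerSeries ℚ) ^ m))) := by
          apply Finset.sum_congr rfl
          intro m _
          rw [coeff_mul]
      _ = ∑ x ∈ Finset.HasAntidiagonal.antidiagonal n, ∑ m ∈ Finset.range (n + 2),
            coeff x.1 ((∏' i : ℕ, (1 + (X : PowerSeries ℚ) ^ (i + 1))) *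
              (∏' i : ℕ, (1 - (X : PowerSeries ℚ) ^ (i + 1)))⁻¹) *
            coeff x.2 ((m : PowerSeries ℚ) *
              ((X : PowerSeries ℚ) ^ (m * (m - 1) / 2) * (1 - (X : PowerSeries ℚ) ^ m))) :=
          Finset.sum_comm
      _ = ∑ x ∈ Finset.HasAntidiagonal.antidiagonal n,
            coeff x.1 ((∏' i : ℕ, (1 + (X : PowerSeries ℚ) ^ (i + 1))) *
              (∏' i : ℕ, (1 - (X : PowerSeries ℚ) ^ (i + 1)))⁻¹) *
            coeff x.2 (∑' m : ℕ, (m : PowerSeries ℚ) *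
              ((X : PowerSeries ℚ) ^ (m * (m - 1) / 2) * (1 - (X : PowerSeries ℚ) ^ m))) := by
          apply Finset.sum_congr rfl
          intro x hx
          rw [Finset.HasAntidiagonal.mem_antidiagonal] at hx
          rw [← Finset.mul_sum, OPAux.coeff_tsum_of_tail OPAux.g_tail x.2]
          congr 1
          apply (Finset.sum_subset (Finset.range_subset_range.2 (by omega)) ?_).symm
          intro m' _ hm'
          rw [Finset.mem_range] at hm'
          exact OPAux.g_tail x.2 m' (by omega)
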